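/- Let E and E' be normed spaces with E' complete, and let φ : E × E → ℝ≥0 satisfy Σ_{i=0}^∞ 2^{−i} φ(2^i a, 2^i b) < ∞ for all a, b. If f : E → E' satisfies ‖f(a+b) − f(a) − f(b)‖ ≤ φ(a,b) for all a, b, then the sequence (2^{−n} f(2^n a))_n is Cauchy for each a, its limit d(a) defines an additive map d : E → E', and ‖f(a) − d(a)‖ ≤ (1/2) Σ_{i=0}^∞ 2^{−i} φ(2^i a, 2^i a) for all a. Moreover d is the unique additive map satisfying this bound. -/

import Mathlib

open Filter Topology

set_option linter.unusedVariables false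

theorem stmt {E E' : Type*} [NormedAddCommGroup E] [NormedSpace ℝ E]
    [NormedAddCommGroup E'] [NormedSpace ℝ E'] [CompleteSpace E']
    (φ : E → E → ℝ) (hφ0 : ∀ a b : E, 0 ≤ φ a b)
    (hsum : ∀ a b : E, Summable fun i : ℕ =>
      ((2 : ℝ) ^ i)⁻¹ * φ ((2 : ℝ) ^ i • a) ((2 : ℝ) ^ i • b))
    (f : E → E') (hf : ∀ a b : E, ‖f (a + b) - f a - f b‖ ≤ φ a b) :
    (∀ a : E, CauchySeq fun n : ℕ => ((2 : ℝ) ^ n)⁻¹ • f ((2 : ℝ) ^ n • a)) ∧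
    ∃ d : E → E',
      (∀ a : E, Tendsto (fun n : ℕ => ((2 : ℝ) ^ n)⁻¹ • f ((2 : ℝ) ^ n • a)) atTop (𝓝 (d a))) ∧
      (∀ a b : E, d (a + b) = d a + d b) ∧
      (∀ a : E, ‖f a - d a‖ ≤
        2⁻¹ * ∑' i : ℕ, ((2 : ℝ) ^ i)⁻¹ * φ ((2 : ℝ) ^ i • a) ((2 : ℝ) ^ i • a)) ∧
      ∀ d' : E → E', (∀ a b : E, d' (a + b) = d' a + d' b) →
        (∀ a : E, ‖f a - d' a‖ ≤
          2⁻¹ * ∑' i : ℕ, ((2 : ℝ) ^ i)⁻¹ * φ ((2 : ℝ) ^ i • a) ((2 : ℝ) ^ i • a)) → d' = d := by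
  set g : E → ℕ → E' := fun a n => ((2 : ℝ) ^ n)⁻¹ • f ((2 : ℝ) ^ n • a) with hg
  set u : E → ℕ → ℝ := fun a i =>
    ((2 : ℝ) ^ i)⁻¹ * φ ((2 : ℝ) ^ i • a) ((2 : ℝ) ^ i • a) with hu
  have hdist : ∀ (a : E) (n : ℕ), dist (g a n) (g a (n + 1)) ≤ 2⁻¹ * u a n := by
    intro a n
    have h2 : ((2 : ℝ) ^ (n + 1)) • a = (2 : ℝ) ^ n • a + (2 : ℝ) ^ n • a := by
      rw [pow_succ, mul_comm, mul_smul, two_smul]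
    have key : g a n - g a (n + 1) =
        -(((2 : ℝ) ^ (n + 1))⁻¹ • (f ((2 : ℝ) ^ n • a + (2 : ℝ) ^ n • a)
          - f ((2 : ℝ) ^ n • a) - f ((2 : ℝ) ^ n • a))) := by
      rw [hg]
      simp only [h2]
      rw [smul_sub, smul_sub, pow_succ]
      have : ((2 : ℝ) ^ n * 2)⁻¹ • f ((2 : ℝ) ^ n • a) =
          (2 : ℝ)⁻¹ • (((2 : ℝ) ^ n)⁻¹ • f ((2 : ℝ) ^ n • a)) := by
        rw [smul_smul, mul_inv, mul_comm]
      rw [this]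
      module
    rw [dist_eq_norm, key, norm_neg, norm_smul]
    have hb := hf ((2 : ℝ) ^ n • a) ((2 : ℝ) ^ n • a)
    have hpos : (0 : ℝ) < (2 : ℝ) ^ (n + 1) := by positivity
    calc ‖((2 : ℝ) ^ (n + 1))⁻¹‖ * ‖f ((2 : ℝ) ^ n • a + (2 : ℝ) ^ n • a)
          - f ((2 : ℝ) ^ n • a) - f ((2 : ℝ) ^ n • a)‖
        ≤ ((2 : ℝ) ^ (n + 1))⁻¹ * φ ((2 : ℝ) ^ n • a) ((2 : ℝ) ^ n • a) := by
          rw [Real.norm_eq_abs, abs_of_pos (by positivity)]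
          exact mul_le_mul_of_nonneg_left hb (by positivity)
      _ = 2⁻¹ * u a n := by rw [hu]; ring
  have hsummu : ∀ a : E, Summable fun n => 2⁻¹ * u a n := fun a => (hsum a a).mul_left _
  have hcauchy : ∀ a : E, CauchySeq (g a) := fun a =>
    cauchySeq_of_dist_le_of_summable _ (hdist a) (hsummu a)
  choose d hd using fun a => cauchySeq_tendsto_of_complete (hcauchy a)
  have hadd : ∀ a b : E, d (a + b) = d a + d b := by
    intro a b
    have hlim : Tendsto (fun n => g (a + b) n - g a n - g b n) atTop
        (𝓝 (d (a + b) - d a - d b)) := ((hd (a + b)).sub (hd a)).sub (hd b)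
    have hzero : Tendsto (fun n => g (a + b) n - g a n - g b n) atTop (𝓝 0) := by
      rw [tendsto_zero_iff_norm_tendsto_zero]
      apply squeeze_zero (fun n => norm_nonneg _)
        (g := fun n => ((2 : ℝ) ^ n)⁻¹ * φ ((2 : ℝ) ^ n • a) ((2 : ℝ) ^ n • b))
      · intro n
        have hsmul : (2 : ℝ) ^ n • (a + b) = (2 : ℝ) ^ n • a + (2 : ℝ) ^ n • b := smul_add _ _ _
        have : g (a + b) n - g a n - g b n = ((2 : ℝ) ^ n)⁻¹ •
            (f ((2 : ℝ) ^ n • a + (2 : ℝ) ^ n • b) - f ((2 : ℝ) ^ n • a)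
              - f ((2 : ℝ) ^ n • b)) := by
          rw [hg]; simp only [hsmul]; rw [smul_sub, smul_sub]
        rw [this, norm_smul, Real.norm_eq_abs, abs_of_pos (by positivity)]
        exact mul_le_mul_of_nonneg_left (hf _ _) (by positivity)
      · exact (hsum a b).tendsto_atTop_zero
    have h := tendsto_nhds_unique hlim hzero
    have h2 : d (a + b) - (d a + d b) = 0 := by rw [← h]; abel
    exact sub_eq_zero.mp h2
  have hbound : ∀ a : E, ‖f a - d a‖ ≤ 2⁻¹ * ∑' i : ℕ, u a i := by
    intro a
    have h0 : g a 0 = f a := by rw [hg]; simp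
    have := dist_le_tsum_of_dist_le_of_tendsto₀ _ (hdist a) (hsummu a) (hd a)
    rw [h0, dist_eq_norm] at this
    rwa [tsum_mul_left] at this
  refine ⟨hcauchy, d, hd, hadd, hbound, ?_⟩
  intro d' hd'add hd'bound
  set dm : E →+ E' := AddMonoidHom.mk' d' hd'add with hdm
  have hcast : ∀ n : ℕ, ((2 : ℝ) ^ n) = ((2 ^ n : ℕ) : ℝ) := by intro n; push_cast; ring
  have hdn : ∀ (n : ℕ) (b : E), d' ((2 : ℝ) ^ n • b) = (2 : ℝ) ^ n • d' b := by
    intro n b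
    have h1 : dm ((2 ^ n : ℕ) • b) = (2 ^ n : ℕ) • dm b := dm.map_nsmul (2 ^ n) b
    simp only [hdm, AddMonoidHom.mk'_apply] at h1
    rw [hcast, Nat.cast_smul_eq_nsmul, h1, ← Nat.cast_smul_eq_nsmul ℝ, ← hcast]
  have htail : ∀ (a : E) (n : ℕ), ‖g a n - d' a‖ ≤ 2⁻¹ * ∑' i : ℕ, u a (i + n) := by
    intro a n
    have hb := hd'bound ((2 : ℝ) ^ n • a)
    have hkey : g a n - d' a = ((2 : ℝ) ^ n)⁻¹ • (f ((2 : ℝ) ^ n • a)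
        - d' ((2 : ℝ) ^ n • a)) := by
      rw [hg, smul_sub, hdn, smul_smul, inv_mul_cancel₀ (by positivity), one_smul]
    rw [hkey, norm_smul, Real.norm_eq_abs, abs_of_pos (by positivity)]
    calc ((2 : ℝ) ^ n)⁻¹ * ‖f ((2 : ℝ) ^ n • a) - d' ((2 : ℝ) ^ n • a)‖
        ≤ ((2 : ℝ) ^ n)⁻¹ * (2⁻¹ * ∑' i : ℕ, ((2 : ℝ) ^ i)⁻¹ *
            φ ((2 : ℝ) ^ i • ((2 : ℝ) ^ n • a)) ((2 : ℝ) ^ i • ((2 : ℝ) ^ n • a))) :=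
          mul_le_mul_of_nonneg_left hb (by positivity)
      _ = 2⁻¹ * ∑' i : ℕ, u a (i + n) := by
          rw [← mul_assoc, mul_comm (((2 : ℝ) ^ n)⁻¹) 2⁻¹, mul_assoc, ← tsum_mul_left]
          congr 1
          apply tsum_congr
          intro i
          rw [hu]
          have hsm : (2 : ℝ) ^ i • ((2 : ℝ) ^ n • a) = (2 : ℝ) ^ (i + n) • a := by
            rw [smul_smul, ← pow_add]
          rw [hsm, pow_add]
          ring
  have htend : ∀ a : E, Tendsto (g a) atTop (𝓝 (d' a)) := by
    intro a
    rw [tendsto_iff_norm_sub_tendsto_zero]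
    apply squeeze_zero (fun n => norm_nonneg _) (htail a)
    simpa using (tendsto_sum_nat_add (u a)).const_mul (2⁻¹ : ℝ)
  funext a
  exact tendsto_nhds_unique (htend a) (hd a)
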